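/- Let n ≥ 1, let I = (i_0, i_1, …, i_n) ∈ ℤ^{n+1}, and let f be a holomorphic (complex differentiable) function on ℂ^{n+1} \ {0} satisfying the semi-invariance f(t_0 z_0, t_1 z_1, …, t_n z_n) = t_0^{−i_0} t_1^{−i_1} ⋯ t_n^{−i_n} · f(z_0, …, z_n) for all (t_0,…,t_n) with |t_ℓ| = 1 for every ℓ and all (z_0,…,z_n) ∈ ℂ^{n+1} \ {0}. Then: (1) if some i_ℓ > 0, then f is identically zero; (2) if i_ℓ ≤ 0 for all ℓ, then there is a constant c ∈ ℂ with f(z_0,…,z_n) = c · z_0^{−i_0} z_1^{−i_1} ⋯ z_n^{−i_n} for all (z_0,…,z_n) ∈ ℂ^{n+1} \ {0}. (This computes the weight-I subspace of H^0((ℂ^{n+1})^×, 𝒪) under the (S^1)^{n+1}-action: it is spanned by the monomial z^{−I} when I ∈ ℤ_{≤0}^{n+1} and vanishes otherwise.) -/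

import Mathlib

open Complex Filter

lemma rot_entire_aux (h : ℂ → ℂ) (hd : Differentiable ℂ h) (m : ℕ)
    (hrot : ∀ t : ℂ, ‖t‖ = 1 → ∀ w, h (t * w) = t ^ m * h w) :
    ∀ w, h w = h 1 * w ^ m := by
  set k : ℂ → ℂ := fun w => h w - h 1 * w ^ m with hk
  have kd : Differentiable ℂ k := hd.sub ((differentiable_const _).mul (differentiable_pow m))
  have kan : AnalyticOnNhd ℂ k Set.univ := analyticOnNhd_univ_iff_differentiable.mpr kd
  have hz : ∀ t : ℂ, ‖t‖ = 1 → k t = 0 := by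
    intro t ht
    have h1 := hrot t ht 1
    simp only [mul_one] at h1
    simp [hk, h1, mul_comm]
  have htend : Tendsto (fun j : ℕ => Complex.exp (Complex.I * ((1/(j+1) : ℝ) : ℂ)))
      atTop (nhdsWithin (1:ℂ) {(1:ℂ)}ᶜ) := by
    rw [tendsto_nhdsWithin_iff]
    constructor
    · have h0 : Tendsto (fun j : ℕ => Complex.I * ((1/(j+1) : ℝ) : ℂ)) atTop (nhds 0) := by
        have : Tendsto (fun j : ℕ => (1/(j+1) : ℝ)) atTop (nhds 0) := by
          exact tendsto_one_div_add_atTop_nhds_zero_nat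
        have h2 := (Complex.continuous_ofReal.tendsto 0).comp this
        have h3 : Tendsto (fun z : ℂ => Complex.I * z) (nhds 0) (nhds (Complex.I * 0)) :=
          (continuous_const.mul continuous_id).tendsto 0
        rw [mul_zero] at h3
        exact h3.comp h2
      have := (Complex.continuous_exp.tendsto 0).comp h0
      simpa [Function.comp_def] using this
    · filter_upwards with j
      simp only [Set.mem_compl_iff, Set.mem_singleton_iff]
      intro hcon
      rw [Complex.exp_eq_one_iff] at hcon
      obtain ⟨c, hc⟩ := hcon
      have hI : (Complex.I : ℂ) ≠ 0 := Complex.I_ne_zero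
      have hx : ((1/(j+1) : ℝ) : ℂ) = (c : ℂ) * (2 * Real.pi) := by
        have : Complex.I * ((1/(j+1) : ℝ) : ℂ) = Complex.I * ((c : ℂ) * (2 * Real.pi)) := by
          rw [hc]; push_cast; ring
        exact mul_left_cancel₀ hI this
      have hxr : (1/(j+1) : ℝ) = (c : ℝ) * (2 * Real.pi) := by exact_mod_cast hx
      have hpos : (0:ℝ) < 1/(j+1) := by positivity
      have hle : (1/(j+1) : ℝ) ≤ 1 := by
        rw [div_le_one (by positivity)]; linarith [Nat.cast_nonneg (α := ℝ) j]
      have hpi := Real.pi_gt_three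
      rcases lt_trichotomy c 0 with hc0 | hc0 | hc0
      · have hcle : c ≤ -1 := by omega
        have : (c:ℝ) ≤ -1 := by exact_mod_cast hcle
        nlinarith
      · simp [hc0] at hxr; linarith
      · have hcge : 1 ≤ c := by omega
        have : (1:ℝ) ≤ (c:ℝ) := by exact_mod_cast hcge
        nlinarith
  have hfr : ∃ᶠ z in nhdsWithin (1:ℂ) {(1:ℂ)}ᶜ, k z = 0 := by
    apply htend.frequently
    apply Frequently.of_forall
    intro j
    apply hz
    rw [Complex.norm_exp]
    have : (Complex.I * ((1/(j+1) : ℝ) : ℂ)).re = 0 := by simp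
    rw [this, Real.exp_zero]
  have := kan.eqOn_zero_of_preconnected_of_frequently_eq_zero isPreconnected_univ
    (Set.mem_univ 1) hfr
  intro w
  have hw := this (Set.mem_univ w)
  simpa [hk, sub_eq_zero] using hw


/-- Let `f` be holomorphic on `(ℂ^{n+1})^× = ℂ^{n+1} \ {0}` and
semi-invariant of weight `I = (i_0, …, i_n)` under the coordinatewise action of the
torus `(S¹)^{n+1}`, i.e. `f(t ⬝ z) = (Π_ℓ t_ℓ^{-i_ℓ}) f(z)` whenever all `|t_ℓ| = 1`.
Then (1) if some `i_ℓ > 0`, `f` vanishes identically on `ℂ^{n+1} \ {0}`, and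
(2) if all `i_ℓ ≤ 0`, `f` is a constant multiple of the monomial `z^{-I}`. -/
theorem weight_space_H0_punctured_Cn
    (n : ℕ) (hn : 1 ≤ n) (I : Fin (n + 1) → ℤ) (f : (Fin (n + 1) → ℂ) → ℂ)
    (hf : DifferentiableOn ℂ f {z : Fin (n + 1) → ℂ | z ≠ 0})
    (hinv : ∀ t z : Fin (n + 1) → ℂ, (∀ l, ‖t l‖ = 1) → z ≠ 0 →
      f (fun l => t l * z l) = (∏ l, t l ^ (-(I l))) * f z) :
    ((∃ l, 0 < I l) → ∀ z : Fin (n + 1) → ℂ, z ≠ 0 → f z = 0) ∧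
    ((∀ l, I l ≤ 0) → ∃ c : ℂ, ∀ z : Fin (n + 1) → ℂ, z ≠ 0 →
      f z = c * ∏ l, z l ^ (-(I l))) := by
  have hopen : IsOpen {z : Fin (n + 1) → ℂ | z ≠ 0} := isOpen_ne
  -- every index has a distinct companion index
  have other : ∀ l : Fin (n + 1), ∃ l' : Fin (n + 1), l' ≠ l := by
    intro l
    rcases Nat.lt_or_ge 0 l.1 with h | h
    · exact ⟨⟨0, Nat.succ_pos n⟩, fun hc => by
        have := congrArg Fin.val hc; simp at this; omega⟩
    · refine ⟨⟨1, by omega⟩, fun hc => ?_⟩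
      have := congrArg Fin.val hc; simp at this; omega
  -- updates of all-nonzero vectors are nonzero
  have hupd : ∀ (z : Fin (n + 1) → ℂ), (∀ j, z j ≠ 0) → ∀ (l : Fin (n + 1)) (w : ℂ),
      Function.update z l w ≠ 0 := by
    intro z hz l w hcon
    obtain ⟨l', hl'⟩ := other l
    have h0 : Function.update z l w l' = 0 := by rw [hcon]; rfl
    rw [Function.update_of_ne hl'] at h0
    exact hz l' h0
  -- the single-variable slice is entire
  have hdiff : ∀ (z : Fin (n + 1) → ℂ), (∀ j, z j ≠ 0) → ∀ l : Fin (n + 1),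
      Differentiable ℂ (fun w : ℂ => f (Function.update z l w)) := by
    intro z hz l
    have hu : Differentiable ℂ (fun w : ℂ => Function.update z l w) := by
      have : (fun w : ℂ => Function.update z l w) = fun (w : ℂ) (j : Fin (n+1)) =>
          if j = l then w else z j := by
        funext w j; rw [Function.update_apply]
      rw [this]
      apply differentiable_pi.mpr
      intro j
      by_cases h : j = l <;> simp [h] <;> exact differentiable_const _
    intro w
    have hmem : Function.update z l w ∈ {z : Fin (n + 1) → ℂ | z ≠ 0} := hupd z hz l w
    exact (hf.differentiableAt (hopen.mem_nhds hmem)).comp w (hu w)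
  -- the rotation law for a single slice
  have hrot : ∀ (z : Fin (n + 1) → ℂ), (∀ j, z j ≠ 0) → ∀ (l : Fin (n + 1)) (t : ℂ),
      ‖t‖ = 1 → ∀ w : ℂ,
      f (Function.update z l (t * w)) = t ^ (-(I l)) * f (Function.update z l w) := by
    intro z hz l t ht w
    set t' : Fin (n + 1) → ℂ := Function.update (fun _ => (1 : ℂ)) l t with ht'
    have habs : ∀ j, ‖t' j‖ = 1 := by
      intro j
      by_cases h : j = l <;> simp [ht', Function.update_apply, h, ht]
    have h1 := hinv t' (Function.update z l w) habs (hupd z hz l w)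
    have h2 : (fun j => t' j * Function.update z l w j) = Function.update z l (t * w) := by
      funext j
      by_cases h : j = l
      · subst h; simp [ht']
      · simp [ht', Function.update_apply, h]
    have h3 : (∏ j, t' j ^ (-(I j))) = t ^ (-(I l)) := by
      rw [Finset.prod_eq_single l]
      · simp [ht']
      · intro j _ hj; simp [ht', Function.update_apply, hj]
      · intro h; exact absurd (Finset.mem_univ l) h
    rw [h2, h3] at h1
    exact h1
  -- approximating sequence with all coordinates nonzero
  have approx : ∀ (z : Fin (n + 1) → ℂ), ∃ u : ℕ → (Fin (n + 1) → ℂ),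
      (∀ k, ∀ j, u k j ≠ 0) ∧ Tendsto u atTop (nhds z) := by
    intro z
    refine ⟨fun k j => if z j = 0 then ((1 / (k + 1) : ℝ) : ℂ) else z j, ?_, ?_⟩
    · intro k j
      by_cases h : z j = 0
      · simp only [h, if_true]
        rw [Ne, Complex.ofReal_eq_zero]
        positivity
      · simpa [h] using h
    · rw [tendsto_pi_nhds]
      intro j
      by_cases h : z j = 0
      · simp only [h, if_true]
        have hr : Tendsto (fun k : ℕ => (1 / (k + 1) : ℝ)) atTop (nhds 0) := by
          exact tendsto_one_div_add_atTop_nhds_zero_nat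
        have hcomp := (Complex.continuous_ofReal.tendsto 0).comp hr
        have : (Complex.ofReal ∘ fun k : ℕ => (1 / (k + 1) : ℝ)) =
            fun k : ℕ => ((1 / (k + 1) : ℝ) : ℂ) := rfl
        rw [this] at hcomp
        simpa using hcomp
      · simpa [h] using tendsto_const_nhds
  constructor
  · -- Part 1
    rintro ⟨l, hl⟩
    have hzero : ∀ z : Fin (n + 1) → ℂ, (∀ j, z j ≠ 0) → f z = 0 := by
      intro z hz
      set p := (I l).toNat with hp
      have hppos : 0 < p := by omega
      set h : ℂ → ℂ := fun w => f (Function.update z l w) with hh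
      set g : ℂ → ℂ := fun w => w ^ p * h w with hg
      have gd : Differentiable ℂ g := (differentiable_pow p).mul (hdiff z hz l)
      have grot : ∀ t : ℂ, ‖t‖ = 1 → ∀ w, g (t * w) = t ^ (0 : ℕ) * g w := by
        intro t ht w
        have htne : t ≠ 0 := by
          intro hc; rw [hc] at ht; simp at ht
        have h1 : h (t * w) = t ^ (-(I l)) * h w := hrot z hz l t ht w
        have h2 : (t : ℂ) ^ p = t ^ ((I l) : ℤ) := by
          rw [← zpow_natCast, hp, Int.toNat_of_nonneg hl.le]
        calc g (t * w) = (t ^ p * w ^ p) * (t ^ (-(I l)) * h w) := by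
              rw [hg]; simp only [mul_pow, h1]
          _ = (t ^ ((I l) : ℤ) * t ^ (-(I l))) * (w ^ p * h w) := by rw [h2]; ring
          _ = t ^ (0 : ℕ) * g w := by
              rw [← zpow_add₀ htne]; simp [hg]
      have hgw := rot_entire_aux g gd 0 grot
      have hg0 : g 0 = 0 := by
        simp [hg, zero_pow hppos.ne']
      have hg1 : g 1 = 0 := by
        have := hgw 0
        rw [hg0] at this
        simpa using this.symm
      have := hgw (z l)
      rw [hg1, zero_mul] at this
      rw [hg] at this
      simp only at this
      rcases mul_eq_zero.mp this with hcase | hcase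
      · exact absurd hcase (pow_ne_zero p (hz l))
      · have hcase' : f (Function.update z l (z l)) = 0 := hcase
        rwa [Function.update_eq_self] at hcase'
    intro z hz0
    obtain ⟨u, hu1, hu2⟩ := approx z
    have hc : ContinuousAt f z := (hf.differentiableAt (hopen.mem_nhds hz0)).continuousAt
    have h1 : Tendsto (fun k => f (u k)) atTop (nhds (f z)) := hc.tendsto.comp hu2
    have h2 : (fun k => f (u k)) = fun _ => (0 : ℂ) := by
      funext k; exact hzero (u k) (hu1 k)
    rw [h2] at h1
    exact (tendsto_nhds_unique h1 tendsto_const_nhds)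
  · -- Part 2
    intro hI
    set m : Fin (n + 1) → ℕ := fun j => (-(I j)).toNat with hm
    have hA : ∀ (l : Fin (n + 1)) (z : Fin (n + 1) → ℂ), (∀ j, z j ≠ 0) →
        f z = f (Function.update z l 1) * z l ^ (m l) := by
      intro l z hz
      set h : ℂ → ℂ := fun w => f (Function.update z l w) with hh
      have hrotm : ∀ t : ℂ, ‖t‖ = 1 → ∀ w, h (t * w) = t ^ (m l) * h w := by
        intro t ht w
        have h1 := hrot z hz l t ht w
        have h2 : t ^ (-(I l)) = t ^ (m l) := by
          rw [← zpow_natCast, hm]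
          simp only
          rw [Int.toNat_of_nonneg (neg_nonneg.mpr (hI l))]
        rw [h2] at h1
        exact h1
      have := rot_entire_aux h (hdiff z hz l) (m l) hrotm (z l)
      rw [hh] at this
      simp only [Function.update_eq_self] at this
      exact this
    have hB : ∀ s : Finset (Fin (n + 1)), ∀ z : Fin (n + 1) → ℂ, (∀ j, z j ≠ 0) →
        f z = f (fun j => if j ∈ s then 1 else z j) * ∏ j ∈ s, z j ^ (m j) := by
      intro s
      induction s using Finset.induction with
      | empty => intro z hz; simp
      | @insert l s hl ih =>
        intro z hz
        have step1 := ih z hz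
        set z' : Fin (n + 1) → ℂ := fun j => if j ∈ s then 1 else z j with hz'
        have hz'ne : ∀ j, z' j ≠ 0 := by
          intro j
          by_cases h : j ∈ s <;> simp [hz', h, hz j]
        have step2 := hA l z' hz'ne
        have hz'l : z' l = z l := by simp [hz', hl]
        have hupdz' : Function.update z' l 1 = fun j => if j ∈ insert l s then 1 else z j := by
          funext j
          by_cases h : j = l
          · subst h; simp
          · rw [Function.update_of_ne h]
            simp [hz', Finset.mem_insert, h]
        rw [step1, step2, hz'l, hupdz', Finset.prod_insert hl]
        ring
    set c : ℂ := f (fun _ => 1) with hc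
    have hmain : ∀ z : Fin (n + 1) → ℂ, (∀ j, z j ≠ 0) → f z = c * ∏ j, z j ^ (m j) := by
      intro z hz
      have := hB Finset.univ z hz
      simpa using this
    refine ⟨c, ?_⟩
    intro z hz0
    have hzpow : ∀ z : Fin (n + 1) → ℂ, (∏ j, z j ^ (-(I j))) = ∏ j, z j ^ (m j) := by
      intro z
      apply Finset.prod_congr rfl
      intro j _
      rw [← zpow_natCast, hm]
      simp only
      rw [Int.toNat_of_nonneg (neg_nonneg.mpr (hI j))]
    rw [hzpow]
    obtain ⟨u, hu1, hu2⟩ := approx z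
    have hcont : ContinuousAt f z := (hf.differentiableAt (hopen.mem_nhds hz0)).continuousAt
    have h1 : Tendsto (fun k => f (u k)) atTop (nhds (f z)) := hcont.tendsto.comp hu2
    have heq : (fun k => f (u k)) = fun k => c * ∏ j, u k j ^ (m j) := by
      funext k; exact hmain (u k) (hu1 k)
    rw [heq] at h1
    have h2 : Tendsto (fun k => c * ∏ j, u k j ^ (m j)) atTop
        (nhds (c * ∏ j, z j ^ (m j))) := by
      apply Tendsto.const_mul
      apply tendsto_finset_prod
      intro j _
      exact ((tendsto_pi_nhds.mp hu2) j).pow (m j)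
    exact tendsto_nhds_unique h1 h2
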